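/- For all integers i ≥ 0 and k ≥ 0 and every j ∈ ℤ, the function ξ ↦ ξ₂^{i+k} · (∂^i X/∂ξ₂^i)(ξ) is square-integrable on Π^{(j)}, and, for i ≥ 1, so is the function ξ ↦ ξ₂^{i+k} · (∂^i X/∂ξ₁ ∂ξ₂^{i−1})(ξ). (The weighted ξ₂-derivatives of the boundary-layer function X belong to L₂(Π^{(j)}).) -/

import Mathlib

open MeasureTheory

/-- The boundary-layer function `X(ξ) = Re ln sin z + ln 2 − ξ₂`, `z = ξ₁ + i ξ₂`. -/
noncomputable def boundaryLayerX (ξ : ℝ × ℝ) : ℝ :=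
  Real.log ‖Complex.sin ((ξ.1 : ℂ) + (ξ.2 : ℂ) * Complex.I)‖ +
    Real.log 2 - ξ.2

/-- The half-strip `Π^{(j)} = {ξ : |ξ₁ − π j| < π/2, ξ₂ > 0}`. -/
def halfStrip (j : ℤ) : Set (ℝ × ℝ) :=
  {ξ | |ξ.1 - Real.pi * j| < Real.pi / 2 ∧ 0 < ξ.2}

open Complex Set Filter

namespace BL

noncomputable def ee (z : ℂ) : ℂ := Complex.exp (2 * Complex.I * z)
noncomputable def uu (z : ℂ) : ℂ := (1 - ee z)⁻¹

noncomputable def S : ℕ → Polynomial ℂ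
  | 0 => Polynomial.C (-2 * Complex.I)
  | n+1 => Polynomial.C (2 * Complex.I) * Polynomial.X *
      (S n + (Polynomial.X - 1) * (S n).derivative)

noncomputable def F : ℕ → ℂ → ℂ
  | 0 => fun z => Complex.log (1 - ee z)
  | n+1 => fun z => (S n).eval (uu z) * (uu z - 1)

variable {z : ℂ}

lemma abs_ee (z : ℂ) : ‖ee z‖ = Real.exp (-(2 * z.im)) := by
  rw [ee, Complex.norm_exp]
  congr 1
  simp [Complex.mul_re]

lemma ee_abs_lt (hz : 0 < z.im) : ‖ee z‖ < 1 := by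
  rw [abs_ee]
  rw [Real.exp_lt_one_iff]
  linarith

lemma re_pos (hz : 0 < z.im) : 0 < (1 - ee z).re := by
  have h1 : (ee z).re ≤ ‖ee z‖ := Complex.re_le_norm _
  have h2 := ee_abs_lt hz
  simp only [Complex.sub_re, Complex.one_re]
  linarith

lemma one_sub_ne (hz : 0 < z.im) : (1 - ee z) ≠ 0 := by
  intro h
  have := re_pos hz
  rw [h] at this
  simp at this

lemma slit (hz : 0 < z.im) : (1 - ee z) ∈ Complex.slitPlane :=
  Complex.mem_slitPlane_iff.mpr (Or.inl (re_pos hz))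

lemma uu_ne (hz : 0 < z.im) : uu z ≠ 0 := inv_ne_zero (one_sub_ne hz)

lemma uu_sub_one (hz : 0 < z.im) : uu z - 1 = uu z * ee z := by
  rw [uu]
  field_simp [one_sub_ne hz]
  ring

lemma hasDerivAt_ee (z : ℂ) : HasDerivAt ee (2 * Complex.I * ee z) z := by
  have h1 : HasDerivAt (fun w : ℂ => 2 * Complex.I * w) (2 * Complex.I) z := by
    simpa using (hasDerivAt_id z).const_mul (2 * Complex.I)
  have h := (Complex.hasDerivAt_exp (2 * Complex.I * z)).comp z h1
  have h2 : HasDerivAt (fun w : ℂ => Complex.exp (2 * Complex.I * w))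
      (2 * Complex.I * Complex.exp (2 * Complex.I * z)) z := by
    simpa [Function.comp_def, mul_comm] using h
  exact h2

lemma hasDerivAt_uu (hz : 0 < z.im) :
    HasDerivAt uu (2 * Complex.I * ((uu z) ^ 2 - uu z)) z := by
  have h2 : HasDerivAt (fun w : ℂ => 1 - ee w) (-(2 * Complex.I * ee z)) z :=
    (hasDerivAt_ee z).const_sub 1
  have h3 : HasDerivAt (fun w : ℂ => (1 - ee w)⁻¹) _ z := h2.inv (one_sub_ne hz)
  convert h3 using 1
  · rfl
  rw [uu]
  field_simp [one_sub_ne hz]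
  ring

lemma hasDerivAt_F (n : ℕ) (hz : 0 < z.im) : HasDerivAt (F n) (F (n+1) z) z := by
  cases n with
  | zero =>
    have h2 : HasDerivAt (fun w : ℂ => 1 - ee w) (-(2 * Complex.I * ee z)) z :=
      (hasDerivAt_ee z).const_sub 1
    have hlog := (Complex.hasDerivAt_log (slit hz)).comp z h2
    have : HasDerivAt (F 0) ((1 - ee z)⁻¹ * -(2 * Complex.I * ee z)) z := by
      simpa [F, Function.comp_def] using hlog
    convert this using 1
    have h4 := uu_sub_one hz
    simp only [F, S, Polynomial.eval_mul, Polynomial.eval_C]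
    rw [h4, ← uu]
    ring
  | succ n =>
    have hu := hasDerivAt_uu hz
    have hp : HasDerivAt (fun w : ℂ => (S n).eval (uu w))
        ((S n).derivative.eval (uu z) * (2 * Complex.I * ((uu z) ^ 2 - uu z))) z :=
      ((S n).hasDerivAt (uu z)).comp z hu
    have hq : HasDerivAt (fun w : ℂ => uu w - 1)
        (2 * Complex.I * ((uu z) ^ 2 - uu z)) z := hu.sub_const 1
    have hm := hp.mul hq
    have : HasDerivAt (F (n+1))
        ((S n).derivative.eval (uu z) * (2 * Complex.I * ((uu z) ^ 2 - uu z)) * (uu z - 1)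
          + (S n).eval (uu z) * (2 * Complex.I * ((uu z) ^ 2 - uu z))) z := by
      simpa [F, Pi.mul_def] using hm
    convert this using 1
    simp only [F, S, Polynomial.eval_mul, Polynomial.eval_add, Polynomial.eval_C,
      Polynomial.eval_X, Polynomial.eval_sub, Polynomial.eval_one]
    ring

end BL
namespace BL

lemma X_eq (x t : ℝ) (ht : 0 < t) :
    boundaryLayerX (x, t) = (F 0 ((x:ℂ) + (t:ℂ) * Complex.I)).re := by
  set z : ℂ := (x:ℂ) + (t:ℂ) * Complex.I with hzdef
  have him : z.im = t := by simp [hzdef]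
  have hne : (1 - ee z) ≠ 0 := one_sub_ne (by rw [him]; exact ht)
  have hA : 0 < ‖1 - ee z‖ := by
    simpa [norm_pos_iff] using hne
  have hexppos := Real.exp_pos t
  have hsin : Complex.sin z = Complex.exp (-z * Complex.I) * (1 - ee z) * Complex.I / 2 := by
    have h1 : Complex.exp (z * Complex.I) = Complex.exp (-z * Complex.I) * ee z := by
      rw [ee, ← Complex.exp_add]
      congr 1
      ring
    rw [Complex.sin, h1]
    ring
  have habs : ‖Complex.sin z‖ = Real.exp t * ‖1 - ee z‖ / 2 := by
    rw [hsin]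
    rw [norm_div, norm_mul, norm_mul, Complex.norm_exp, Complex.norm_I]
    have : (-z * Complex.I).re = t := by
      simp [him]
    rw [this]
    simp
  have hre : (F 0 z).re = Real.log (‖1 - ee z‖) := by
    show (Complex.log (1 - ee z)).re = _
    rw [Complex.log_re]
  rw [boundaryLayerX]
  rw [show Complex.sin ((x:ℂ) + (t:ℂ) * Complex.I) = Complex.sin z from rfl]
  rw [habs, hre]
  rw [Real.log_div (by positivity) two_ne_zero, Real.log_mul (Real.exp_ne_zero t) (ne_of_gt hA),
    Real.log_exp]
  ring

lemma hasDerivAt_line {Fn : ℂ → ℂ} {G : ℂ} (a b : ℂ) {s : ℝ}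
    (hF : HasDerivAt Fn G (a + (s:ℂ) * b)) :
    HasDerivAt (fun s : ℝ => Fn (a + (s:ℂ) * b)) (G * b) s := by
  have h1 : HasDerivAt (fun s : ℝ => a + (s:ℂ) * b) b s := by
    simpa using (Complex.ofRealCLM.hasDerivAt.mul_const b).const_add a
  have h2 := (hF.hasFDerivAt.restrictScalars ℝ).comp_hasDerivAt s h1
  simpa [Function.comp_def, mul_comm] using h2

lemma hasDerivAt_re_line {Fn : ℂ → ℂ} {G : ℂ} (c a b : ℂ) {s : ℝ}
    (hF : HasDerivAt Fn G (a + (s:ℂ) * b)) :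
    HasDerivAt (fun s : ℝ => (c * Fn (a + (s:ℂ) * b)).re) ((c * (G * b)).re) s := by
  have h1 := (hasDerivAt_line a b hF).const_mul c
  have h2 := Complex.reCLM.hasFDerivAt.comp_hasDerivAt s h1
  simpa [Function.comp_def] using h2

lemma iter_eq (n : ℕ) (x : ℝ) :
    ∀ t : ℝ, 0 < t → iteratedDeriv n (fun s : ℝ => boundaryLayerX (x, s)) t
      = (Complex.I ^ n * F n ((x:ℂ) + (t:ℂ) * Complex.I)).re := by
  induction n with
  | zero =>
    intro t ht
    simpa using X_eq x t ht
  | succ n ih =>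
    intro t ht
    rw [iteratedDeriv_succ]
    have hev : iteratedDeriv n (fun s : ℝ => boundaryLayerX (x, s)) =ᶠ[nhds t]
        fun s : ℝ => (Complex.I ^ n * F n ((x:ℂ) + (s:ℂ) * Complex.I)).re := by
      filter_upwards [Ioi_mem_nhds ht] with s hs
      exact ih s hs
    rw [hev.deriv_eq]
    have hz : 0 < ((x:ℂ) + (t:ℂ) * Complex.I).im := by simpa using ht
    have hd := hasDerivAt_re_line (Complex.I ^ n) (x:ℂ) Complex.I (hasDerivAt_F n hz)
    rw [hd.deriv]
    congr 1
    ring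

lemma deriv_x_eq (n : ℕ) {t : ℝ} (ht : 0 < t) (x : ℝ) :
    deriv (fun u : ℝ => iteratedDeriv n (fun s : ℝ => boundaryLayerX (u, s)) t) x
      = (Complex.I ^ n * F (n+1) ((x:ℂ) + (t:ℂ) * Complex.I)).re := by
  have hfun : (fun u : ℝ => iteratedDeriv n (fun s : ℝ => boundaryLayerX (u, s)) t)
      = fun u : ℝ => (Complex.I ^ n * F n (((t:ℂ) * Complex.I) + (u:ℂ) * 1)).re := by
    funext u
    rw [iter_eq n u t ht]
    rw [show (((t:ℂ) * Complex.I) + (u:ℂ) * 1) = ((u:ℂ) + (t:ℂ) * Complex.I) from by ring]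
  rw [hfun]
  have hz : 0 < (((t:ℂ) * Complex.I) + (x:ℂ) * 1).im := by simpa using ht
  have hd := hasDerivAt_re_line (Complex.I ^ n) ((t:ℂ) * Complex.I) 1 (hasDerivAt_F n hz)
  rw [hd.deriv]
  rw [show (((t:ℂ) * Complex.I) + (x:ℂ) * 1) = ((x:ℂ) + (t:ℂ) * Complex.I) from by ring,
    mul_one]

end BL
namespace BL

lemma poly_bound (p : Polynomial ℂ) :
    ∃ c : ℝ, 0 < c ∧ ∀ v : ℂ, ‖p.eval v‖ ≤ c * max 1 (‖v‖) ^ p.natDegree := by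
  refine ⟨(∑ m ∈ Finset.range (p.natDegree + 1), ‖p.coeff m‖) + 1, by positivity, ?_⟩
  intro v
  have h1 : 1 ≤ max 1 (‖v‖) := le_max_left _ _
  have hM : 0 ≤ max 1 (‖v‖) := by linarith
  rw [Polynomial.eval_eq_sum_range]
  calc ‖∑ m ∈ Finset.range (p.natDegree + 1), p.coeff m * v ^ m‖
      ≤ ∑ m ∈ Finset.range (p.natDegree + 1), ‖p.coeff m * v ^ m‖ :=
        norm_sum_le _ _
    _ ≤ ∑ m ∈ Finset.range (p.natDegree + 1),
          ‖p.coeff m‖ * max 1 (‖v‖) ^ p.natDegree := by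
        apply Finset.sum_le_sum
        intro m hm
        rw [norm_mul, norm_pow]
        apply mul_le_mul_of_nonneg_left _ (norm_nonneg _)
        calc ‖v‖ ^ m ≤ max 1 (‖v‖) ^ m :=
              pow_le_pow_left₀ (norm_nonneg _) (le_max_right _ _) m
          _ ≤ max 1 (‖v‖) ^ p.natDegree := by
              apply pow_le_pow_right₀ h1
              exact Nat.lt_succ_iff.mp (Finset.mem_range.mp hm)
    _ = (∑ m ∈ Finset.range (p.natDegree + 1), ‖p.coeff m‖)
          * max 1 (‖v‖) ^ p.natDegree := by rw [Finset.sum_mul]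
    _ ≤ _ := by
        apply mul_le_mul_of_nonneg_right _ (pow_nonneg hM _)
        linarith

lemma S_natDegree : ∀ n : ℕ, (S n).natDegree ≤ n := by
  intro n
  induction n with
  | zero =>
    show (Polynomial.C (-2 * Complex.I)).natDegree ≤ 0
    exact le_of_eq (Polynomial.natDegree_C _)
  | succ n ih =>
    rw [S]
    set d := (S n).natDegree with hd
    have hder : ((Polynomial.X - 1 : Polynomial ℂ) * (S n).derivative).natDegree ≤ d := by
      rcases eq_or_ne ((S n).derivative) 0 with h | h
      · simp [h]
      · have h1 : (S n).derivative.natDegree ≤ d - 1 := Polynomial.natDegree_derivative_le _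
        have hd1 : 1 ≤ d := by
          by_contra hcon
          push_neg at hcon
          interval_cases d
          · obtain ⟨a, ha⟩ := Polynomial.natDegree_eq_zero.mp hd.symm
            rw [← ha] at h
            simp at h
        calc ((Polynomial.X - 1 : Polynomial ℂ) * (S n).derivative).natDegree
            ≤ (Polynomial.X - 1 : Polynomial ℂ).natDegree + (S n).derivative.natDegree :=
              Polynomial.natDegree_mul_le
          _ ≤ 1 + (d - 1) := by
              gcongr
              simpa using Polynomial.natDegree_X_sub_C_le (1:ℂ)
          _ ≤ d := by omega
    have hsum : ((S n) + (Polynomial.X - 1) * (S n).derivative).natDegree ≤ d :=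
      le_trans (Polynomial.natDegree_add_le _ _) (max_le le_rfl hder)
    calc (Polynomial.C (2 * Complex.I) * Polynomial.X *
          ((S n) + (Polynomial.X - 1) * (S n).derivative)).natDegree
        ≤ (Polynomial.C (2 * Complex.I) * Polynomial.X).natDegree
          + ((S n) + (Polynomial.X - 1) * (S n).derivative).natDegree :=
          Polynomial.natDegree_mul_le
      _ ≤ 1 + d := by
          gcongr
          simpa using Polynomial.natDegree_C_mul_le (2 * Complex.I) Polynomial.X
      _ ≤ n + 1 := by omega

lemma S_bound (n : ℕ) :
    ∃ c : ℝ, 0 < c ∧ ∀ v : ℂ, ‖(S n).eval v‖ ≤ c * max 1 (‖v‖) ^ n := by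
  obtain ⟨c, hc, h⟩ := poly_bound (S n)
  refine ⟨c, hc, fun v => le_trans (h v) ?_⟩
  have h1 : 1 ≤ max 1 (‖v‖) := le_max_left _ _
  apply mul_le_mul_of_nonneg_left _ hc.le
  exact pow_le_pow_right₀ h1 (S_natDegree n)

variable {z : ℂ}

lemma F_bound (n : ℕ) :
    ∃ c : ℝ, 0 < c ∧ ∀ z : ℂ, 0 < z.im →
      ‖F (n+1) z‖ ≤ c * Real.exp (-(2 * z.im)) * max 1 (‖uu z‖) ^ (n+1) := by
  obtain ⟨c, hc, h⟩ := S_bound n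
  refine ⟨c, hc, fun z hz => ?_⟩
  have h1 : ‖F (n+1) z‖ = ‖(S n).eval (uu z)‖ *
      (‖uu z‖ * Real.exp (-(2 * z.im))) := by
    show ‖(S n).eval (uu z) * (uu z - 1)‖ = _
    rw [norm_mul, uu_sub_one hz, norm_mul, abs_ee]
  rw [h1, pow_succ]
  have h2 := h (uu z)
  have h3 : ‖uu z‖ ≤ max 1 (‖uu z‖) := le_max_right _ _
  have he := Real.exp_pos (-(2 * z.im))
  have hm0 : (0:ℝ) ≤ max 1 (‖uu z‖) := le_trans zero_le_one (le_max_left _ _)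
  calc ‖(S n).eval (uu z)‖ * (‖uu z‖ * Real.exp (-(2 * z.im)))
      ≤ (c * max 1 (‖uu z‖) ^ n) *
        (max 1 (‖uu z‖) * Real.exp (-(2 * z.im))) := by
        apply mul_le_mul h2 _ (by positivity) (by positivity)
        exact mul_le_mul_of_nonneg_right h3 he.le
    _ = c * Real.exp (-(2 * z.im)) * (max 1 (‖uu z‖) ^ n * max 1 (‖uu z‖)) := by
        ring

lemma exp_bound_aux {t : ℝ} (ht : 0 < t) : 0 < 1 - Real.exp (-(2 * t)) := by
  have : Real.exp (-(2 * t)) < Real.exp 0 := Real.exp_lt_exp.mpr (by linarith)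
  simpa using this

lemma uu_abs_le (hz : 0 < z.im) :
    ‖uu z‖ ≤ (1 - Real.exp (-(2 * z.im)))⁻¹ := by
  have h0 := exp_bound_aux hz
  have h1 : 1 - Real.exp (-(2 * z.im)) ≤ ‖1 - ee z‖ := by
    have := norm_sub_norm_le (1:ℂ) (ee z)
    simpa [abs_ee] using this
  rw [uu, norm_inv]
  exact inv_anti₀ h0 h1

lemma max_uu_le (hz : 0 < z.im) :
    max 1 (‖uu z‖) ≤ (1 - Real.exp (-(2 * z.im)))⁻¹ := by
  have h0 := exp_bound_aux hz
  apply max_le _ (uu_abs_le hz)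
  rw [le_inv_comm₀ one_pos h0]
  simp
  positivity

lemma t_mul_inv_le {t : ℝ} (ht : 0 < t) :
    t * (1 - Real.exp (-(2 * t)))⁻¹ ≤ 1 + t := by
  have h0 := exp_bound_aux ht
  rw [mul_inv_le_iff₀ h0]
  have h1 : t + 1 ≤ Real.exp (2 * t) := by
    have := Real.add_one_le_exp (2 * t)
    linarith
  have h2 : Real.exp (-(2 * t)) * Real.exp (2 * t) = 1 := by
    rw [← Real.exp_add]; simp
  nlinarith [Real.exp_pos (-(2 * t))]

end BL
namespace BL

lemma im_xt (x t : ℝ) : ((x:ℂ) + (t:ℂ) * Complex.I).im = t := by simp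

lemma bound_main (n : ℕ) :
    ∃ c : ℝ, 0 < c ∧ ∀ (m : ℕ) (x t : ℝ), 0 < t →
      t ^ (n+1+m) * ‖F (n+1) ((x:ℂ) + (t:ℂ) * Complex.I)‖
        ≤ c * (1+t) ^ (n+1+m) * Real.exp (-(2 * t)) := by
  obtain ⟨c, hc, hF⟩ := F_bound n
  refine ⟨c, hc, ?_⟩
  intro m x t ht
  set z : ℂ := (x:ℂ) + (t:ℂ) * Complex.I with hz
  have him : z.im = t := im_xt x t
  have h1 := hF z (by rw [him]; exact ht)
  rw [him] at h1
  have hVpos := exp_bound_aux ht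
  have hmax : max 1 (‖uu z‖) ≤ (1 - Real.exp (-(2 * t)))⁻¹ := by
    have := max_uu_le (z := z) (by rw [him]; exact ht)
    rwa [him] at this
  have htV : t * max 1 (‖uu z‖) ≤ 1 + t := by
    calc t * max 1 (‖uu z‖) ≤ t * (1 - Real.exp (-(2 * t)))⁻¹ := by
          apply mul_le_mul_of_nonneg_left hmax ht.le
      _ ≤ 1 + t := t_mul_inv_le ht
  have hm0 : (0:ℝ) ≤ max 1 (‖uu z‖) := le_trans zero_le_one (le_max_left _ _)
  have hexp := Real.exp_pos (-(2 * t))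
  have h2 : t ^ (n+1) * max 1 (‖uu z‖) ^ (n+1) ≤ (1+t) ^ (n+1) := by
    rw [← mul_pow]
    exact pow_le_pow_left₀ (by positivity) htV _
  have h3 : t ^ m ≤ (1+t) ^ m := pow_le_pow_left₀ ht.le (by linarith) m
  calc t ^ (n+1+m) * ‖F (n+1) z‖
      ≤ t ^ (n+1+m) * (c * Real.exp (-(2 * t)) * max 1 (‖uu z‖) ^ (n+1)) := by
        apply mul_le_mul_of_nonneg_left h1 (by positivity)
    _ = c * Real.exp (-(2 * t)) * ((t ^ (n+1) * max 1 (‖uu z‖) ^ (n+1)) * t ^ m) := by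
        rw [pow_add]; ring
    _ ≤ c * Real.exp (-(2 * t)) * ((1+t) ^ (n+1) * (1+t) ^ m) := by
        apply mul_le_mul_of_nonneg_left _ (by positivity)
        apply mul_le_mul h2 h3 (by positivity) (by positivity)
    _ = c * (1+t) ^ (n+1+m) * Real.exp (-(2 * t)) := by
        rw [pow_add]; ring

lemma log_ineq1 {t : ℝ} (ht : 0 < t) :
    -Real.log (1 - Real.exp (-(2 * t))) ≤ 2 * t - Real.log (2 * t) := by
  have hE := Real.add_one_le_exp (2 * t)
  have hEpos := Real.exp_pos (2 * t)
  have hεpos := Real.exp_pos (-(2 * t))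
  have hmul : Real.exp (-(2 * t)) * Real.exp (2 * t) = 1 := by
    rw [← Real.exp_add]; simp
  have hlow : 2 * t * Real.exp (-(2 * t)) ≤ 1 - Real.exp (-(2 * t)) := by
    nlinarith
  have hpos2 : 0 < 2 * t * Real.exp (-(2 * t)) := by positivity
  have := Real.log_le_log hpos2 hlow
  rw [Real.log_mul (by positivity) (ne_of_gt hεpos), Real.log_exp] at this
  linarith

lemma log_ineq2 {t : ℝ} (ht : 0 < t) :
    -Real.log (1 - Real.exp (-(2 * t)))
      ≤ Real.exp (-(2 * t)) * (1 - Real.exp (-(2 * t)))⁻¹ := by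
  have h0 := exp_bound_aux ht
  have h1 : Real.log (1 - Real.exp (-(2 * t)))⁻¹ ≤ (1 - Real.exp (-(2 * t)))⁻¹ - 1 :=
    Real.log_le_sub_one_of_pos (by positivity)
  rw [Real.log_inv] at h1
  have h2 : (1 - Real.exp (-(2 * t)))⁻¹ - 1
      = Real.exp (-(2 * t)) * (1 - Real.exp (-(2 * t)))⁻¹ := by
    field_simp
    ring
  linarith [h1, h2.symm.le]

lemma neg_log_le_rpow {t : ℝ} (ht : 0 < t) :
    -Real.log t ≤ 4 * t ^ (-(1/4) : ℝ) := by
  have h1 : Real.log (t ^ (-(1/4):ℝ)) = (-(1/4)) * Real.log t := Real.log_rpow ht _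
  have h2 : Real.log (t ^ (-(1/4):ℝ)) ≤ t ^ (-(1/4):ℝ) - 1 :=
    Real.log_le_sub_one_of_pos (Real.rpow_pos_of_pos ht _)
  have h3 : (0:ℝ) < t ^ (-(1/4):ℝ) := Real.rpow_pos_of_pos ht _
  nlinarith

lemma X_abs_le {t : ℝ} (ht : 0 < t) (x : ℝ) :
    |(F 0 ((x:ℂ) + (t:ℂ) * Complex.I)).re| ≤ -Real.log (1 - Real.exp (-(2 * t))) := by
  set z : ℂ := (x:ℂ) + (t:ℂ) * Complex.I with hz
  have him : z.im = t := im_xt x t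
  have himt : 0 < z.im := by rw [him]; exact ht
  have h0 := exp_bound_aux ht
  have hre : (F 0 z).re = Real.log (‖1 - ee z‖) := by
    show (Complex.log (1 - ee z)).re = _
    rw [Complex.log_re]
  have hlo : 1 - Real.exp (-(2 * t)) ≤ ‖1 - ee z‖ := by
    have := norm_sub_norm_le (1:ℂ) (ee z)
    simpa [abs_ee, him] using this
  have hhi : ‖1 - ee z‖ ≤ 1 + Real.exp (-(2 * t)) := by
    have := norm_sub_le (1:ℂ) (ee z)
    simpa [abs_ee, him] using this
  have hApos : 0 < ‖1 - ee z‖ := lt_of_lt_of_le h0 hlo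
  rw [hre]
  rcases le_or_gt (Real.log (‖1 - ee z‖)) 0 with hneg | hpos
  · rw [abs_of_nonpos hneg]
    have := Real.log_le_log h0 hlo
    linarith
  · rw [abs_of_pos hpos]
    have h1 : Real.log (‖1 - ee z‖) ≤ Real.log (1 + Real.exp (-(2 * t))) :=
      Real.log_le_log hApos hhi
    have h2 : Real.log (1 + Real.exp (-(2 * t))) ≤ Real.exp (-(2 * t)) := by
      have := Real.log_le_sub_one_of_pos (show (0:ℝ) < 1 + Real.exp (-(2 * t)) by positivity)
      linarith
    have h3 : Real.exp (-(2 * t)) ≤ -Real.log (1 - Real.exp (-(2 * t))) := by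
      have := Real.log_le_sub_one_of_pos h0
      linarith
    linarith

lemma bound_zero (k : ℕ) {t : ℝ} (ht : 0 < t) (x : ℝ) :
    t ^ k * |(F 0 ((x:ℂ) + (t:ℂ) * Complex.I)).re|
      ≤ (1+t) ^ (k+1) * Real.exp (-(2 * t))
        + (6 * Real.exp 1) * (t ^ (-(1/4) : ℝ) * Real.exp (-t)) := by
  have h0 := exp_bound_aux ht
  have hX := X_abs_le ht x
  set L : ℝ := -Real.log (1 - Real.exp (-(2 * t))) with hL
  have hLnn : 0 ≤ L := by
    have : Real.log (1 - Real.exp (-(2 * t))) ≤ 0 :=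
      Real.log_nonpos h0.le (by nlinarith [Real.exp_pos (-(2 * t))])
    simp [hL]; linarith
  have htk : (0:ℝ) ≤ t ^ k := by positivity
  rcases le_or_gt t 1 with h1 | h1
  · -- small t
    have hrp : (0:ℝ) < t ^ (-(1/4):ℝ) := Real.rpow_pos_of_pos ht _
    have hrp1 : (1:ℝ) ≤ t ^ (-(1/4):ℝ) := by
      have := Real.rpow_le_rpow_of_exponent_ge ht h1 (show (-(1/4):ℝ) ≤ 0 by norm_num)
      simpa using this
    have hLle : L ≤ 6 * t ^ (-(1/4):ℝ) := by
      have ha := log_ineq1 ht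
      have hb : -Real.log (2 * t) = -Real.log 2 - Real.log t := by
        rw [Real.log_mul two_ne_zero (ne_of_gt ht)]; ring
      have hc := neg_log_le_rpow ht
      have hlog2 : (0:ℝ) ≤ Real.log 2 := Real.log_nonneg (by norm_num)
      have : L ≤ 2 * t - Real.log 2 - Real.log t := by rw [hL]; linarith
      calc L ≤ 2 * t - Real.log 2 - Real.log t := this
        _ ≤ 2 + 4 * t ^ (-(1/4):ℝ) := by linarith
        _ ≤ 6 * t ^ (-(1/4):ℝ) := by linarith
    have hexp1 : 1 ≤ Real.exp 1 * Real.exp (-t) := by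
      rw [← Real.exp_add]
      have : (0:ℝ) ≤ 1 + -t := by linarith
      calc (1:ℝ) = Real.exp 0 := by simp
        _ ≤ Real.exp (1 + -t) := Real.exp_le_exp.mpr this
    have htk1 : t ^ k ≤ 1 := pow_le_one₀ ht.le h1
    have key : t ^ k * |(F 0 ((x:ℂ) + (t:ℂ) * Complex.I)).re|
        ≤ (6 * Real.exp 1) * (t ^ (-(1/4):ℝ) * Real.exp (-t)) := by
      calc t ^ k * |(F 0 ((x:ℂ) + (t:ℂ) * Complex.I)).re| ≤ 1 * L := by
            apply mul_le_mul htk1 hX (abs_nonneg _) zero_le_one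
        _ = L := one_mul L
        _ ≤ 6 * t ^ (-(1/4):ℝ) := hLle
        _ ≤ (6 * Real.exp 1) * (t ^ (-(1/4):ℝ) * Real.exp (-t)) := by
            nlinarith [Real.exp_pos (-t), Real.exp_pos 1]
    have hnn : (0:ℝ) ≤ (1+t) ^ (k+1) * Real.exp (-(2 * t)) := by positivity
    linarith
  · -- large t
    have hV := t_mul_inv_le ht
    have hVpos : (0:ℝ) < (1 - Real.exp (-(2 * t)))⁻¹ := by positivity
    have hV1 : (1:ℝ) ≤ (1 - Real.exp (-(2 * t)))⁻¹ := by
      rw [le_inv_comm₀ one_pos h0]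
      simp
      positivity
    have hVle : (1 - Real.exp (-(2 * t)))⁻¹ ≤ 1 + t := by
      nlinarith
    have hLle : L ≤ Real.exp (-(2 * t)) * (1 + t) := by
      calc L ≤ Real.exp (-(2 * t)) * (1 - Real.exp (-(2 * t)))⁻¹ := log_ineq2 ht
        _ ≤ Real.exp (-(2 * t)) * (1 + t) := by
            apply mul_le_mul_of_nonneg_left hVle (Real.exp_pos _).le
    have htk2 : t ^ k ≤ (1+t) ^ k := pow_le_pow_left₀ ht.le (by linarith) k
    have key : t ^ k * |(F 0 ((x:ℂ) + (t:ℂ) * Complex.I)).re|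
        ≤ (1+t) ^ (k+1) * Real.exp (-(2 * t)) := by
      calc t ^ k * |(F 0 ((x:ℂ) + (t:ℂ) * Complex.I)).re|
          ≤ (1+t) ^ k * (Real.exp (-(2 * t)) * (1 + t)) := by
            apply mul_le_mul htk2 (le_trans hX hLle) (abs_nonneg _) (by positivity)
        _ = (1+t) ^ (k+1) * Real.exp (-(2 * t)) := by rw [pow_succ]; ring
    have hnn : (0:ℝ) ≤ (6 * Real.exp 1) * (t ^ (-(1/4):ℝ) * Real.exp (-t)) := by
      have : (0:ℝ) ≤ t ^ (-(1/4):ℝ) := (Real.rpow_pos_of_pos ht _).le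
      positivity
    linarith

end BL
namespace BL

lemma strip_eq (j : ℤ) :
    halfStrip j = (Ioo (Real.pi * j - Real.pi/2) (Real.pi * j + Real.pi/2)) ×ˢ (Ioi (0:ℝ)) := by
  ext ⟨x, t⟩
  simp only [halfStrip, Set.mem_setOf_eq, Set.mem_prod, Set.mem_Ioo, Set.mem_Ioi,
    abs_sub_lt_iff]
  constructor
  · rintro ⟨⟨h1, h2⟩, h3⟩
    exact ⟨⟨by linarith, by linarith⟩, h3⟩
  · rintro ⟨⟨h1, h2⟩, h3⟩
    exact ⟨⟨by linarith, by linarith⟩, h3⟩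

lemma measurableSet_strip (j : ℤ) : MeasurableSet (halfStrip j) := by
  rw [strip_eq]
  exact measurableSet_Ioo.prod measurableSet_Ioi

lemma mem_strip_pos {j : ℤ} {ξ : ℝ × ℝ} (h : ξ ∈ halfStrip j) : 0 < ξ.2 := h.2

lemma poly_exp (N : ℕ) {t : ℝ} (ht : 0 ≤ t) :
    (1+t) ^ N ≤ ((N:ℝ)+1) ^ N * Real.exp t := by
  have hN : (1:ℝ) ≤ (N:ℝ) + 1 := by
    have : (0:ℝ) ≤ (N:ℝ) := Nat.cast_nonneg N
    linarith
  have h1 : 1 + t ≤ ((N:ℝ)+1) * Real.exp (t/((N:ℝ)+1)) := by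
    have he := Real.add_one_le_exp (t/((N:ℝ)+1))
    have hc : ((N:ℝ)+1) * (t/((N:ℝ)+1)) = t := by field_simp
    nlinarith [Real.exp_pos (t/((N:ℝ)+1))]
  calc (1+t) ^ N ≤ (((N:ℝ)+1) * Real.exp (t/((N:ℝ)+1))) ^ N :=
        pow_le_pow_left₀ (by linarith) h1 N
    _ = ((N:ℝ)+1) ^ N * Real.exp (t/((N:ℝ)+1)) ^ N := mul_pow _ _ _
    _ ≤ ((N:ℝ)+1) ^ N * Real.exp t := by
        apply mul_le_mul_of_nonneg_left _ (by positivity)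
        rw [← Real.exp_nat_mul]
        apply Real.exp_le_exp.mpr
        rw [mul_div_assoc']
        rw [div_le_iff₀ (by positivity)]
        nlinarith

/-- The dominating function is in L² on the half strip. -/
lemma memLp_dom (j : ℤ) (M : ℕ) (c : ℝ) (hc : 0 ≤ c) :
    MemLp (fun ξ : ℝ × ℝ => c * ((1+ξ.2) ^ M * Real.exp (-(2 * ξ.2))
      + ξ.2 ^ (-(1/4):ℝ) * Real.exp (-ξ.2))) 2 (volume.restrict (halfStrip j)) := by
  set h : ℝ → ℝ := fun t => c * ((1+t) ^ M * Real.exp (-(2 * t))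
      + t ^ (-(1/4):ℝ) * Real.exp (-t)) with hh
  have hcont : ContinuousOn h (Ioi (0:ℝ)) := by
    apply ContinuousOn.mul continuousOn_const
    apply ContinuousOn.add
    · apply ContinuousOn.mul
      · exact ((continuous_const.add continuous_id).pow M).continuousOn
      · exact (Real.continuous_exp.comp (continuous_const.mul continuous_id).neg).continuousOn
    · apply ContinuousOn.mul
      · intro t htt
        exact (Real.continuousAt_rpow_const t _ (Or.inl (ne_of_gt htt))).continuousWithinAt
      · exact (Real.continuous_exp.comp continuous_neg).continuousOn
  have hmeas2 : AEStronglyMeasurable (fun ξ : ℝ × ℝ => h ξ.2) (volume.restrict (halfStrip j)) := by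
    have hcont2 : ContinuousOn (fun ξ : ℝ × ℝ => h ξ.2) (halfStrip j) :=
      hcont.comp continuous_snd.continuousOn (fun ξ hξ => mem_strip_pos hξ)
    exact hcont2.aestronglyMeasurable (measurableSet_strip j)
  have hgoal : MemLp (fun ξ : ℝ × ℝ => h ξ.2) 2 (volume.restrict (halfStrip j)) := by
    rw [memLp_two_iff_integrable_sq hmeas2]
    rw [strip_eq, Measure.volume_eq_prod, ← Measure.prod_restrict]
    have h1 : Integrable (fun _ : ℝ => (1:ℝ))
        (volume.restrict (Ioo (Real.pi * j - Real.pi/2) (Real.pi * j + Real.pi/2))) := by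
      rw [← IntegrableOn, integrableOn_const_iff]
      exact Or.inr measure_Ioo_lt_top
    have h2 : Integrable (fun t : ℝ => h t ^ 2) (volume.restrict (Ioi (0:ℝ))) := by
      set P : ℝ := (((2*M:ℕ):ℝ) + 1) ^ (2*M) with hP
      have hPpos : 0 < P := by positivity
      have hg : Integrable (fun t : ℝ => (2*c^2) * (P * Real.exp (-t)
          + Real.exp (-t) * t ^ ((1/2:ℝ) - 1))) (volume.restrict (Ioi (0:ℝ))) := by
        apply Integrable.const_mul
        apply Integrable.add
        · have := exp_neg_integrableOn_Ioi 0 (show (0:ℝ) < 1 by norm_num)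
          simp only [neg_mul, one_mul] at this
          exact this.const_mul P
        · exact Real.GammaIntegral_convergent (by norm_num : (0:ℝ) < 1/2)
      apply Integrable.mono hg
      · exact (hcont.pow 2).aestronglyMeasurable measurableSet_Ioi
      · filter_upwards [self_mem_ae_restrict measurableSet_Ioi] with t htt
        have ht : (0:ℝ) < t := htt
        have hrp : (0:ℝ) < t ^ (-(1/4):ℝ) := Real.rpow_pos_of_pos ht _
        have he2 := Real.exp_pos (-(2*t))
        have he1 := Real.exp_pos (-t)
        set A : ℝ := (1+t) ^ M * Real.exp (-(2 * t)) with hA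
        set B : ℝ := t ^ (-(1/4):ℝ) * Real.exp (-t) with hB
        have hAnn : 0 ≤ A := by positivity
        have hBnn : 0 ≤ B := by positivity
        have hsq : h t ^ 2 ≤ (2*c^2) * (A^2 + B^2) := by
          have hht : h t = c * (A + B) := rfl
          rw [hht]
          nlinarith [mul_nonneg (sq_nonneg c) (sq_nonneg (A - B))]
        have hA2 : A ^ 2 ≤ P * Real.exp (-t) := by
          have hexp2 : Real.exp (-(2 * t)) ^ 2 = Real.exp (-(2*t) + -(2*t)) := by
            rw [Real.exp_add]; ring
          have hpow : ((1+t) ^ M) ^ 2 = (1+t) ^ (2*M) := by rw [← pow_mul, mul_comm]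
          have hpe := poly_exp (2*M) ht.le
          have hle1 : A ^ 2 = (1+t) ^ (2*M) * Real.exp (-(2*t) + -(2*t)) := by
            rw [hA, mul_pow, hpow, hexp2]
          rw [hle1]
          calc (1+t) ^ (2*M) * Real.exp (-(2*t) + -(2*t))
              ≤ (P * Real.exp t) * Real.exp (-(2*t) + -(2*t)) := by
                apply mul_le_mul_of_nonneg_right hpe (Real.exp_pos _).le
            _ = P * (Real.exp t * Real.exp (-(2*t) + -(2*t))) := by ring
            _ = P * Real.exp (t + (-(2*t) + -(2*t))) := by simp [Real.exp_add]
            _ ≤ P * Real.exp (-t) := by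
                apply mul_le_mul_of_nonneg_left _ hPpos.le
                apply Real.exp_le_exp.mpr
                linarith
        have hB2 : B ^ 2 ≤ Real.exp (-t) * t ^ ((1/2:ℝ) - 1) := by
          have h4 : (t ^ (-(1/4):ℝ)) ^ (2:ℕ) = t ^ (-(1/2):ℝ) := by
            rw [← Real.rpow_natCast (t ^ (-(1/4):ℝ)) 2, ← Real.rpow_mul ht.le]
            norm_num
          have hexp1le : Real.exp (-t) ≤ 1 := by
            have : Real.exp (-t) ≤ Real.exp 0 := Real.exp_le_exp.mpr (by linarith)
            simpa using this
          have hexps : Real.exp (-t) ^ (2:ℕ) ≤ Real.exp (-t) := by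
            nlinarith [Real.exp_pos (-t)]
          have hBe : B ^ 2 = t ^ (-(1/2):ℝ) * Real.exp (-t) ^ (2:ℕ) := by
            rw [hB, mul_pow, h4]
          rw [hBe]
          have hhalf : t ^ (-(1/2):ℝ) = t ^ ((1/2:ℝ) - 1) := by norm_num
          rw [hhalf]
          calc t ^ ((1/2:ℝ)-1) * Real.exp (-t) ^ (2:ℕ)
              ≤ t ^ ((1/2:ℝ)-1) * Real.exp (-t) := by
                apply mul_le_mul_of_nonneg_left hexps (Real.rpow_pos_of_pos ht _).le
            _ = Real.exp (-t) * t ^ ((1/2:ℝ)-1) := mul_comm _ _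
        have hrpnn : (0:ℝ) ≤ t ^ ((1/2:ℝ)-1) := (Real.rpow_pos_of_pos ht _).le
        rw [Real.norm_eq_abs, Real.norm_eq_abs, _root_.abs_of_nonneg (by positivity),
          _root_.abs_of_nonneg (by positivity)]
        calc h t ^ 2 ≤ (2*c^2) * (A^2 + B^2) := hsq
          _ ≤ (2*c^2) * (P * Real.exp (-t) + Real.exp (-t) * t ^ ((1/2:ℝ)-1)) := by
              apply mul_le_mul_of_nonneg_left (add_le_add hA2 hB2) (by positivity)
    have := h1.mul_prod h2
    simpa using this
  exact hgoal

end BL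
namespace BL

lemma contOn_F (j : ℤ) (n m : ℕ) (c : ℂ) :
    ContinuousOn (fun ξ : ℝ × ℝ => ξ.2 ^ m * (c * F n ((ξ.1:ℂ) + (ξ.2:ℂ) * Complex.I)).re)
      (halfStrip j) := by
  intro ξ hξ
  apply ContinuousAt.continuousWithinAt
  have hz : 0 < ((ξ.1:ℂ) + (ξ.2:ℂ) * Complex.I).im := by
    simpa using mem_strip_pos hξ
  have hF : ContinuousAt (F n) ((ξ.1:ℂ) + (ξ.2:ℂ) * Complex.I) :=
    (hasDerivAt_F n hz).differentiableAt.continuousAt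
  have hmap : ContinuousAt (fun ξ : ℝ × ℝ => (ξ.1:ℂ) + (ξ.2:ℂ) * Complex.I) ξ := by
    apply Continuous.continuousAt
    continuity
  have h1 : ContinuousAt (fun p : ℝ × ℝ => F n ((p.1:ℂ) + (p.2:ℂ) * Complex.I)) ξ :=
    ContinuousAt.comp hF hmap
  have h2 : ContinuousAt (fun p : ℝ × ℝ => (c * F n ((p.1:ℂ) + (p.2:ℂ) * Complex.I)).re) ξ :=
    Complex.continuous_re.continuousAt.comp (continuousAt_const.mul h1)
  exact ((continuous_snd.pow m).continuousAt).mul h2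

lemma memLp_of_bound (j : ℤ) (M : ℕ) (c : ℝ) (hc : 0 ≤ c) {g : ℝ × ℝ → ℝ}
    (hmeas : AEStronglyMeasurable g (volume.restrict (halfStrip j)))
    (hb : ∀ ξ ∈ halfStrip j, |g ξ| ≤ c * ((1+ξ.2) ^ M * Real.exp (-(2 * ξ.2))
      + ξ.2 ^ (-(1/4):ℝ) * Real.exp (-ξ.2))) :
    MemLp g 2 (volume.restrict (halfStrip j)) := by
  apply MemLp.of_le (memLp_dom j M c hc) hmeas
  filter_upwards [self_mem_ae_restrict (measurableSet_strip j)] with ξ hξ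
  rw [Real.norm_eq_abs, Real.norm_eq_abs]
  exact (hb ξ hξ).trans (le_abs_self _)

lemma abs_re_mul_le (c w : ℂ) (hcabs : ‖c‖ = 1) : |(c * w).re| ≤ ‖w‖ := by
  calc |(c * w).re| ≤ ‖c * w‖ := Complex.abs_re_le_norm _
    _ = ‖w‖ := by rw [norm_mul, hcabs, one_mul]

lemma abs_I_pow (n : ℕ) : ‖Complex.I ^ n‖ = 1 := by
  rw [norm_pow, Complex.norm_I, one_pow]

end BL

open BL in
/-- For all integers `i, k ≥ 0` and every `j`, the function
`ξ ↦ ξ₂^{i+k} ∂^i X/∂ξ₂^i` is square-integrable on `Π^{(j)}`, and for `i ≥ 1`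
so is `ξ ↦ ξ₂^{i+k} ∂^i X/∂ξ₁ ∂ξ₂^{i−1}`. -/
theorem boundaryLayerX_weighted_derivs_L2 (i k : ℕ) (j : ℤ) :
    MemLp (fun ξ : ℝ × ℝ =>
        ξ.2 ^ (i + k) * iteratedDeriv i (fun t => boundaryLayerX (ξ.1, t)) ξ.2) 2
      (volume.restrict (halfStrip j)) ∧
    (1 ≤ i → MemLp (fun ξ : ℝ × ℝ =>
        ξ.2 ^ (i + k) *
          deriv (fun u => iteratedDeriv (i - 1) (fun t => boundaryLayerX (u, t)) ξ.2) ξ.1) 2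
      (volume.restrict (halfStrip j))) := by
  constructor
  · cases i with
    | zero =>
      have heq : ∀ ξ ∈ halfStrip j,
          ξ.2 ^ (0 + k) * iteratedDeriv 0 (fun t => boundaryLayerX (ξ.1, t)) ξ.2
            = ξ.2 ^ (0 + k) *
              (Complex.I ^ (0:ℕ) * F 0 ((ξ.1:ℂ) + (ξ.2:ℂ) * Complex.I)).re := by
        intro ξ hξ
        rw [iter_eq 0 ξ.1 ξ.2 (mem_strip_pos hξ)]
      apply memLp_of_bound j (k+1) (1 + 6 * Real.exp 1)
        (by positivity)
      · apply ((contOn_F j 0 (0 + k) (Complex.I ^ (0:ℕ))).aestronglyMeasurable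
            (measurableSet_strip j)).congr
        filter_upwards [self_mem_ae_restrict (measurableSet_strip j)] with ξ hξ
        exact (heq ξ hξ).symm
      · intro ξ hξ
        have ht : 0 < ξ.2 := mem_strip_pos hξ
        rw [heq ξ hξ]
        have h0 : (Complex.I ^ (0:ℕ) * F 0 ((ξ.1:ℂ) + (ξ.2:ℂ) * Complex.I)).re
            = (F 0 ((ξ.1:ℂ) + (ξ.2:ℂ) * Complex.I)).re := by
          norm_num
        rw [h0, abs_mul, _root_.abs_of_nonneg (pow_nonneg ht.le _)]
        have hb := bound_zero k ht ξ.1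
        have hrp : (0:ℝ) ≤ ξ.2 ^ (-(1/4):ℝ) := (Real.rpow_pos_of_pos ht _).le
        have he2 := (Real.exp_pos (-(2 * ξ.2))).le
        have he1 := (Real.exp_pos (-ξ.2)).le
        have h1t : (0:ℝ) ≤ (1 + ξ.2) ^ (k+1) := by positivity
        have hE := (Real.exp_pos 1).le
        calc ξ.2 ^ (0 + k) * |(F 0 ((ξ.1:ℂ) + (ξ.2:ℂ) * Complex.I)).re|
            ≤ (1+ξ.2) ^ (k+1) * Real.exp (-(2 * ξ.2))
              + (6 * Real.exp 1) * (ξ.2 ^ (-(1/4):ℝ) * Real.exp (-ξ.2)) := by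
              simpa using hb
          _ ≤ (1 + 6 * Real.exp 1) * ((1+ξ.2) ^ (k+1) * Real.exp (-(2 * ξ.2))
              + ξ.2 ^ (-(1/4):ℝ) * Real.exp (-ξ.2)) := by
              nlinarith [mul_nonneg h1t he2, mul_nonneg hrp he1]
    | succ n =>
      obtain ⟨c, hc, hbm⟩ := bound_main n
      have heq : ∀ ξ ∈ halfStrip j,
          ξ.2 ^ (n + 1 + k) * iteratedDeriv (n+1) (fun t => boundaryLayerX (ξ.1, t)) ξ.2
            = ξ.2 ^ (n + 1 + k) *
              (Complex.I ^ (n+1) * F (n+1) ((ξ.1:ℂ) + (ξ.2:ℂ) * Complex.I)).re := by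
        intro ξ hξ
        rw [iter_eq (n+1) ξ.1 ξ.2 (mem_strip_pos hξ)]
      apply memLp_of_bound j (n+1+k) c hc.le
      · apply ((contOn_F j (n+1) (n+1+k) (Complex.I ^ (n+1))).aestronglyMeasurable
            (measurableSet_strip j)).congr
        filter_upwards [self_mem_ae_restrict (measurableSet_strip j)] with ξ hξ
        exact (heq ξ hξ).symm
      · intro ξ hξ
        have ht : 0 < ξ.2 := mem_strip_pos hξ
        rw [heq ξ hξ, abs_mul, _root_.abs_of_nonneg (pow_nonneg ht.le _)]
        have hre := abs_re_mul_le (Complex.I ^ (n+1))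
          (F (n+1) ((ξ.1:ℂ) + (ξ.2:ℂ) * Complex.I)) (abs_I_pow (n+1))
        have hmain := hbm k ξ.1 ξ.2 ht
        have hrp : (0:ℝ) ≤ ξ.2 ^ (-(1/4):ℝ) := (Real.rpow_pos_of_pos ht _).le
        have he1 := (Real.exp_pos (-ξ.2)).le
        calc ξ.2 ^ (n+1+k) * |(Complex.I ^ (n+1) * F (n+1) ((ξ.1:ℂ) + (ξ.2:ℂ) * Complex.I)).re|
            ≤ ξ.2 ^ (n+1+k) * ‖F (n+1) ((ξ.1:ℂ) + (ξ.2:ℂ) * Complex.I)‖ := by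
              apply mul_le_mul_of_nonneg_left hre (by positivity)
          _ ≤ c * (1+ξ.2) ^ (n+1+k) * Real.exp (-(2 * ξ.2)) := hmain
          _ ≤ c * ((1+ξ.2) ^ (n+1+k) * Real.exp (-(2 * ξ.2))
              + ξ.2 ^ (-(1/4):ℝ) * Real.exp (-ξ.2)) := by
              nlinarith [mul_nonneg hrp he1]
  · intro hi
    obtain ⟨n, rfl⟩ : ∃ n, i = n + 1 := ⟨i - 1, by omega⟩
    obtain ⟨c, hc, hbm⟩ := bound_main n
    have heq : ∀ ξ ∈ halfStrip j,
        ξ.2 ^ (n + 1 + k) *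
            deriv (fun u => iteratedDeriv (n + 1 - 1) (fun t => boundaryLayerX (u, t)) ξ.2) ξ.1
          = ξ.2 ^ (n + 1 + k) *
            (Complex.I ^ n * F (n+1) ((ξ.1:ℂ) + (ξ.2:ℂ) * Complex.I)).re := by
      intro ξ hξ
      rw [show n + 1 - 1 = n from rfl]
      rw [deriv_x_eq n (mem_strip_pos hξ) ξ.1]
    apply memLp_of_bound j (n+1+k) c hc.le
    · apply ((contOn_F j (n+1) (n+1+k) (Complex.I ^ n)).aestronglyMeasurable
          (measurableSet_strip j)).congr
      filter_upwards [self_mem_ae_restrict (measurableSet_strip j)] with ξ hξ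
      exact (heq ξ hξ).symm
    · intro ξ hξ
      have ht : 0 < ξ.2 := mem_strip_pos hξ
      rw [heq ξ hξ, abs_mul, _root_.abs_of_nonneg (pow_nonneg ht.le _)]
      have hre := abs_re_mul_le (Complex.I ^ n)
        (F (n+1) ((ξ.1:ℂ) + (ξ.2:ℂ) * Complex.I)) (abs_I_pow n)
      have hmain := hbm k ξ.1 ξ.2 ht
      have hrp : (0:ℝ) ≤ ξ.2 ^ (-(1/4):ℝ) := (Real.rpow_pos_of_pos ht _).le
      have he1 := (Real.exp_pos (-ξ.2)).le
      calc ξ.2 ^ (n+1+k) * |(Complex.I ^ n * F (n+1) ((ξ.1:ℂ) + (ξ.2:ℂ) * Complex.I)).re|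
          ≤ ξ.2 ^ (n+1+k) * ‖F (n+1) ((ξ.1:ℂ) + (ξ.2:ℂ) * Complex.I)‖ := by
            apply mul_le_mul_of_nonneg_left hre (by positivity)
        _ ≤ c * (1+ξ.2) ^ (n+1+k) * Real.exp (-(2 * ξ.2)) := hmain
        _ ≤ c * ((1+ξ.2) ^ (n+1+k) * Real.exp (-(2 * ξ.2))
            + ξ.2 ^ (-(1/4):ℝ) * Real.exp (-ξ.2)) := by
            nlinarith [mul_nonneg hrp he1]
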